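/- With X̄_τ = √(1-τ)X₀ + √τ Z, the Jacobian of the score function satisfies ∂s*_τ(x)/∂x = -(1/τ) I_d + (1/τ²) Cov(X̄_τ - √(1-τ)X₀ | X̄_τ = x), where Cov denotes the conditional covariance matrix. -/

import Mathlib

open MeasureTheory Real

noncomputable def Kf9 (d : ℕ) (τ : ℝ) (y x₀ : EuclideanSpace ℝ (Fin d)) : ℝ :=
  (2 * π * τ) ^ (-(d : ℝ) / 2) * Real.exp (-‖y - Real.sqrt (1 - τ) • x₀‖ ^ 2 / (2 * τ))

noncomputable def L19 (d : ℕ) (τ : ℝ) (y x₀ : EuclideanSpace ℝ (Fin d)) :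
    EuclideanSpace ℝ (Fin d) →L[ℝ] ℝ :=
  (τ⁻¹ * Kf9 d τ y x₀) • innerSL ℝ (Real.sqrt (1 - τ) • x₀ - y)

noncomputable def Hf9 (d : ℕ) (τ : ℝ) (y x₀ : EuclideanSpace ℝ (Fin d)) :
    EuclideanSpace ℝ (Fin d) :=
  (τ⁻¹ * Kf9 d τ y x₀) • (Real.sqrt (1 - τ) • x₀ - y)

noncomputable def Mf9 (d : ℕ) (τ : ℝ) (y x₀ : EuclideanSpace ℝ (Fin d)) :
    EuclideanSpace ℝ (Fin d) →L[ℝ] EuclideanSpace ℝ (Fin d) :=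
  (τ⁻¹ * Kf9 d τ y x₀) • (-(ContinuousLinearMap.id ℝ (EuclideanSpace ℝ (Fin d)))) +
    (τ⁻¹ • L19 d τ y x₀).smulRight (Real.sqrt (1 - τ) • x₀ - y)

lemma Kf9_pos {d : ℕ} {τ : ℝ} (hτ0 : 0 < τ) (y x₀ : EuclideanSpace ℝ (Fin d)) :
    0 < Kf9 d τ y x₀ := by
  have : (0:ℝ) < 2 * π * τ := by positivity
  exact mul_pos (Real.rpow_pos_of_pos this _) (Real.exp_pos _)

lemma Kf9_le {d : ℕ} {τ : ℝ} (hτ0 : 0 < τ) (y x₀ : EuclideanSpace ℝ (Fin d)) :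
    Kf9 d τ y x₀ ≤ (2 * π * τ) ^ (-(d : ℝ) / 2) := by
  have h1 : Real.exp (-‖y - Real.sqrt (1 - τ) • x₀‖ ^ 2 / (2 * τ)) ≤ 1 := by
    rw [Real.exp_le_one_iff]
    apply div_nonpos_of_nonpos_of_nonneg
    · simp [sq_nonneg]
    · linarith
  have h2 : (0:ℝ) < (2 * π * τ) ^ (-(d : ℝ) / 2) :=
    Real.rpow_pos_of_pos (by positivity) _
  calc Kf9 d τ y x₀ ≤ (2 * π * τ) ^ (-(d : ℝ) / 2) * 1 := by
        unfold Kf9; exact mul_le_mul_of_nonneg_left h1 h2.le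
    _ = _ := mul_one _

lemma hasFDerivAt_Kf9 {d : ℕ} {τ : ℝ} (hτ0 : 0 < τ) (x₀ y : EuclideanSpace ℝ (Fin d)) :
    HasFDerivAt (fun z => Kf9 d τ z x₀) (L19 d τ y x₀) y := by
  set w : EuclideanSpace ℝ (Fin d) := Real.sqrt (1 - τ) • x₀ with hw
  have hsub : HasFDerivAt (fun z : EuclideanSpace ℝ (Fin d) => z - w)
      (ContinuousLinearMap.id ℝ (EuclideanSpace ℝ (Fin d))) y :=
    (hasFDerivAt_id y).sub_const w
  have hq := hsub.inner ℝ hsub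
  have h2 := hq.const_mul (-(2*τ)⁻¹)
  have h3 := h2.exp
  have h4 := h3.const_mul ((2 * π * τ) ^ (-(d:ℝ)/2))
  have hfun : (fun z => Kf9 d τ z x₀) = fun z =>
      (2 * π * τ) ^ (-(d:ℝ)/2) *
        Real.exp (-(2*τ)⁻¹ * (inner ℝ (z - w) (z - w) : ℝ)) := by
    funext z
    rw [Kf9, hw, real_inner_self_eq_norm_sq]
    congr 1
    ring
  rw [hfun]
  refine h4.congr_fderiv ?_
  ext v
  simp only [L19, ContinuousLinearMap.smul_apply, innerSL_apply_apply, ContinuousLinearMap.comp_apply,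
    ContinuousLinearMap.prod_apply, fderivInnerCLM_apply, ContinuousLinearMap.id_apply,
    smul_eq_mul, Kf9, real_inner_self_eq_norm_sq]
  rw [show (inner ℝ (w - y) v : ℝ) = -(inner ℝ (y - w) v : ℝ) by
    rw [← inner_neg_left, neg_sub]]
  rw [real_inner_comm v (y - w)]
  rw [show -(2*τ)⁻¹ * ‖y - w‖ ^ 2 = -‖y - w‖ ^ 2 / (2*τ) by ring]
  ring

lemma hasFDerivAt_Hf9 {d : ℕ} {τ : ℝ} (hτ0 : 0 < τ) (x₀ y : EuclideanSpace ℝ (Fin d)) :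
    HasFDerivAt (fun z => Hf9 d τ z x₀) (Mf9 d τ y x₀) y := by
  unfold Hf9 Mf9
  exact ((hasFDerivAt_Kf9 hτ0 x₀ y).const_mul τ⁻¹).smul
    ((hasFDerivAt_id y).const_sub (Real.sqrt (1 - τ) • x₀))

lemma cont_Kf9 {d : ℕ} (τ : ℝ) (y : EuclideanSpace ℝ (Fin d)) :
    Continuous (fun x₀ => Kf9 d τ y x₀) := by
  unfold Kf9; fun_prop

lemma cont_Hf9 {d : ℕ} (τ : ℝ) (y : EuclideanSpace ℝ (Fin d)) :
    Continuous (fun x₀ => Hf9 d τ y x₀) := by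
  unfold Hf9 Kf9; fun_prop

lemma cont_L19 {d : ℕ} (τ : ℝ) (y : EuclideanSpace ℝ (Fin d)) :
    Continuous (fun x₀ => L19 d τ y x₀) := by
  unfold L19
  exact (continuous_const.mul (cont_Kf9 τ y)).smul ((innerSL ℝ).continuous.comp
      ((by fun_prop : Continuous fun x₀ : EuclideanSpace ℝ (Fin d) => Real.sqrt (1-τ) • x₀ - y)))

lemma cont_Mf9 {d : ℕ} (τ : ℝ) (y : EuclideanSpace ℝ (Fin d)) :
    Continuous (fun x₀ => Mf9 d τ y x₀) := by
  unfold Mf9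
  apply Continuous.add
  · exact (continuous_const.mul (cont_Kf9 τ y)).smul continuous_const
  · exact ((ContinuousLinearMap.smulRightL ℝ _ _).continuous.comp
        ((cont_L19 τ y).const_smul τ⁻¹)).clm_apply
      ((by fun_prop : Continuous fun x₀ : EuclideanSpace ℝ (Fin d) => Real.sqrt (1-τ) • x₀ - y))

lemma sub_norm_le9 {d : ℕ} {τ R : ℝ} (hτ0 : 0 < τ) {x₀ : EuclideanSpace ℝ (Fin d)}
    (hx₀ : ‖x₀‖ ≤ R) (z : EuclideanSpace ℝ (Fin d)) :
    ‖Real.sqrt (1 - τ) • x₀ - z‖ ≤ |R| + ‖z‖ := by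
  refine (norm_sub_le _ _).trans (add_le_add ?_ le_rfl)
  rw [norm_smul, Real.norm_eq_abs, abs_of_nonneg (Real.sqrt_nonneg _)]
  exact (mul_le_of_le_one_left (norm_nonneg _) (Real.sqrt_le_one.mpr (by linarith : (1:ℝ) - τ ≤ 1))).trans
    (hx₀.trans (le_abs_self R))

lemma scalar_norm_le9 {d : ℕ} {τ : ℝ} (hτ0 : 0 < τ) (z x₀ : EuclideanSpace ℝ (Fin d)) :
    ‖τ⁻¹ * Kf9 d τ z x₀‖ ≤ τ⁻¹ * (2 * π * τ) ^ (-(d : ℝ) / 2) := by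
  rw [Real.norm_eq_abs, abs_of_pos (mul_pos (inv_pos.mpr hτ0) (Kf9_pos hτ0 z x₀))]
  exact mul_le_mul_of_nonneg_left (Kf9_le hτ0 z x₀) (inv_nonneg.mpr hτ0.le)

lemma L19_norm_le {d : ℕ} {τ R : ℝ} (hτ0 : 0 < τ) {x₀ : EuclideanSpace ℝ (Fin d)}
    (hx₀ : ‖x₀‖ ≤ R) (z : EuclideanSpace ℝ (Fin d)) :
    ‖L19 d τ z x₀‖ ≤ τ⁻¹ * (2 * π * τ) ^ (-(d : ℝ) / 2) * (|R| + ‖z‖) := by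
  unfold L19
  rw [norm_smul (τ⁻¹ * Kf9 d τ z x₀) ((innerSL ℝ) (Real.sqrt (1 - τ) • x₀ - z)), innerSL_apply_norm]
  exact mul_le_mul (scalar_norm_le9 hτ0 z x₀) (sub_norm_le9 hτ0 hx₀ z) (norm_nonneg _)
    (by positivity)

lemma Mf9_norm_le {d : ℕ} {τ R : ℝ} (hτ0 : 0 < τ) {x₀ : EuclideanSpace ℝ (Fin d)}
    (hx₀ : ‖x₀‖ ≤ R) (z : EuclideanSpace ℝ (Fin d)) :
    ‖Mf9 d τ z x₀‖ ≤ τ⁻¹ * (2 * π * τ) ^ (-(d : ℝ) / 2) +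
      τ⁻¹ * (τ⁻¹ * (2 * π * τ) ^ (-(d : ℝ) / 2) * (|R| + ‖z‖)) * (|R| + ‖z‖) := by
  unfold Mf9
  refine (norm_add_le _ _).trans (add_le_add ?_ ?_)
  · rw [norm_smul (τ⁻¹ * Kf9 d τ z x₀) (-ContinuousLinearMap.id ℝ (EuclideanSpace ℝ (Fin d))), norm_neg]
    calc ‖τ⁻¹ * Kf9 d τ z x₀‖ * ‖ContinuousLinearMap.id ℝ (EuclideanSpace ℝ (Fin d))‖
        ≤ (τ⁻¹ * (2 * π * τ) ^ (-(d : ℝ) / 2)) * 1 :=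
          mul_le_mul (scalar_norm_le9 hτ0 z x₀) ContinuousLinearMap.norm_id_le
            (norm_nonneg _) (by positivity)
      _ = _ := mul_one _
  · rw [ContinuousLinearMap.norm_smulRight_apply, norm_smul τ⁻¹ (L19 d τ z x₀), Real.norm_eq_abs,
      abs_of_pos (inv_pos.mpr hτ0)]
    exact mul_le_mul (mul_le_mul_of_nonneg_left (L19_norm_le hτ0 hx₀ z)
      (inv_nonneg.mpr hτ0.le)) (sub_norm_le9 hτ0 hx₀ z) (norm_nonneg _) (by positivity)

set_option maxHeartbeats 2000000 in
/-- Jacobian of the score. With `X̄_τ = √(1-τ)X₀ + √τ Z` (`X₀ ~ p_data` with bounded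
support, `Z ~ N(0,I_d)` independent) and score `s*_τ = ∇ log p_{X̄_τ}`, the Jacobian
satisfies `∂s*_τ(x)/∂x = -(1/τ) I_d + (1/τ²) Cov(X̄_τ - √(1-τ)X₀ | X̄_τ = x)`, where the
conditional covariance acts on a direction `v` as `E[⟪V,v⟫V | x] - ⟪E[V|x],v⟫ E[V|x]`
with `V = x - √(1-τ)X₀`. -/
theorem statement9
    (d : ℕ) (μ : Measure (EuclideanSpace ℝ (Fin d))) [IsProbabilityMeasure μ]
    (R : ℝ) (hsupp : ∀ᵐ x₀ ∂μ, ‖x₀‖ ≤ R)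
    (τ : ℝ) (hτ0 : 0 < τ) (hτ1 : τ < 1)
    (p : EuclideanSpace ℝ (Fin d) → ℝ)
    (hp : ∀ y, p y = ∫ x₀, (2 * π * τ) ^ (-(d : ℝ) / 2) *
        Real.exp (-‖y - Real.sqrt (1 - τ) • x₀‖ ^ 2 / (2 * τ)) ∂μ)
    (x : EuclideanSpace ℝ (Fin d)) (hpx : 0 < p x)
    (w : EuclideanSpace ℝ (Fin d) → ℝ)
    (hw : ∀ x₀, w x₀ = (2 * π * τ) ^ (-(d : ℝ) / 2) *
        Real.exp (-‖x - Real.sqrt (1 - τ) • x₀‖ ^ 2 / (2 * τ)))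
    (cm : EuclideanSpace ℝ (Fin d))
    (hcm : cm = (p x)⁻¹ • ∫ x₀, w x₀ • (x - Real.sqrt (1 - τ) • x₀) ∂μ)
    (cq : EuclideanSpace ℝ (Fin d) → EuclideanSpace ℝ (Fin d))
    (hcq : ∀ v, cq v = (p x)⁻¹ •
      ∫ x₀, (w x₀ * (inner ℝ (x - Real.sqrt (1 - τ) • x₀) v : ℝ)) •
        (x - Real.sqrt (1 - τ) • x₀) ∂μ) :
    ∀ v, fderiv ℝ (fun y => gradient (fun z => Real.log (p z)) y) x v
      = -(1 / τ) • v + (1 / τ ^ 2) • (cq v - (inner ℝ cm v : ℝ) • cm) := by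
  intro v
  have hτ : τ ≠ 0 := ne_of_gt hτ0
  have hCpos : 0 < (2 * π * τ) ^ (-(d : ℝ) / 2) := Real.rpow_pos_of_pos (by positivity) _
  set C : ℝ := (2 * π * τ) ^ (-(d : ℝ) / 2) with hC
  have hp' : ∀ y, p y = ∫ x₀, Kf9 d τ y x₀ ∂μ := fun y => by rw [hp y]; rfl
  have hw' : ∀ x₀, w x₀ = Kf9 d τ x x₀ := fun x₀ => by rw [hw x₀]; rfl
  have hKint : ∀ y, Integrable (fun x₀ => Kf9 d τ y x₀) μ := by
    intro y
    refine Integrable.mono' (integrable_const C) ((cont_Kf9 τ y).aestronglyMeasurable) ?_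
    filter_upwards with x₀
    rw [Real.norm_eq_abs, abs_of_pos (Kf9_pos hτ0 y x₀)]
    exact Kf9_le hτ0 y x₀
  have hppos : ∀ y, 0 < p y := by
    intro y
    rw [hp']
    have hlb : (fun _ : EuclideanSpace ℝ (Fin d) =>
        C * Real.exp (-(‖y‖ + |R|) ^ 2 / (2 * τ))) ≤ᵐ[μ] fun x₀ => Kf9 d τ y x₀ := by
      filter_upwards [hsupp] with x₀ hx₀
      unfold Kf9
      rw [← hC]
      refine mul_le_mul_of_nonneg_left ?_ hCpos.le
      rw [Real.exp_le_exp]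
      have hB : ‖y - Real.sqrt (1 - τ) • x₀‖ ≤ ‖y‖ + |R| := by
        refine (norm_sub_le _ _).trans (add_le_add le_rfl ?_)
        rw [norm_smul, Real.norm_eq_abs, abs_of_nonneg (Real.sqrt_nonneg _)]
        exact (mul_le_of_le_one_left (norm_nonneg _)
          (Real.sqrt_le_one.mpr (by linarith : (1:ℝ) - τ ≤ 1))).trans
          (hx₀.trans (le_abs_self R))
      have h1 : ‖y - Real.sqrt (1 - τ) • x₀‖ ^ 2 ≤ (‖y‖ + |R|) ^ 2 :=
        pow_le_pow_left₀ (norm_nonneg _) hB 2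
      have h2τ : (0:ℝ) < 2 * τ := by linarith
      exact div_le_div_of_nonneg_right (neg_le_neg h1) h2τ.le |>.trans_eq rfl
    calc (0:ℝ) < C * Real.exp (-(‖y‖ + |R|) ^ 2 / (2 * τ)) := by positivity
      _ = ∫ _, C * Real.exp (-(‖y‖ + |R|) ^ 2 / (2 * τ)) ∂μ := by simp
      _ ≤ ∫ x₀, Kf9 d τ y x₀ ∂μ := integral_mono_ae (integrable_const _) (hKint y) hlb
  have hL1int : ∀ y, Integrable (fun x₀ => L19 d τ y x₀) μ := by
    intro y
    refine Integrable.mono' (integrable_const (τ⁻¹ * C * (|R| + ‖y‖)))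
      ((cont_L19 τ y).aestronglyMeasurable) ?_
    filter_upwards [hsupp] with x₀ hx₀
    exact L19_norm_le hτ0 hx₀ y
  have hHint : ∀ y, Integrable (fun x₀ => Hf9 d τ y x₀) μ := by
    intro y
    refine Integrable.mono' (integrable_const ((τ⁻¹ * C) * (|R| + ‖y‖)))
      ((cont_Hf9 τ y).aestronglyMeasurable) ?_
    filter_upwards [hsupp] with x₀ hx₀
    unfold Hf9
    rw [norm_smul (τ⁻¹ * Kf9 d τ y x₀) (Real.sqrt (1 - τ) • x₀ - y)]
    exact mul_le_mul (scalar_norm_le9 hτ0 y x₀) (sub_norm_le9 hτ0 hx₀ y) (norm_nonneg _)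
      (by positivity)
  have hMint : Integrable (fun x₀ => Mf9 d τ x x₀) μ := by
    refine Integrable.mono'
      (integrable_const (τ⁻¹ * C + τ⁻¹ * (τ⁻¹ * C * (|R| + ‖x‖)) * (|R| + ‖x‖)))
      ((cont_Mf9 τ x).aestronglyMeasurable) ?_
    filter_upwards [hsupp] with x₀ hx₀
    exact Mf9_norm_le hτ0 hx₀ x
  have hP : ∀ y, HasFDerivAt p (∫ x₀, L19 d τ y x₀ ∂μ) y := by
    intro y
    have h := hasFDerivAt_integral_of_dominated_of_fderiv_le
      (F := fun z x₀ => Kf9 d τ z x₀) (F' := fun z x₀ => L19 d τ z x₀)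
      (bound := fun _ => τ⁻¹ * C * (|R| + (‖y‖ + 1))) (μ := μ) (x₀ := y) (s := Metric.ball y 1) (Metric.ball_mem_nhds y one_pos)
      (Filter.Eventually.of_forall fun z => (cont_Kf9 τ z).aestronglyMeasurable)
      (hKint y) ((cont_L19 τ y).aestronglyMeasurable) ?_ (integrable_const _)
      (Filter.Eventually.of_forall fun x₀ z _ => hasFDerivAt_Kf9 hτ0 x₀ z)
    · exact h.congr_of_eventuallyEq (Filter.Eventually.of_forall hp')
    · filter_upwards [hsupp] with x₀ hx₀ z hz
      refine (L19_norm_le hτ0 hx₀ z).trans ?_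
      have hz' : ‖z‖ ≤ ‖y‖ + 1 := by
        have := mem_ball_iff_norm.mp hz
        have h2 := norm_sub_norm_le z y
        linarith
      gcongr
  set G : EuclideanSpace ℝ (Fin d) → EuclideanSpace ℝ (Fin d) :=
    fun y => ∫ x₀, Hf9 d τ y x₀ ∂μ with hG
  have hP'eq : ∀ y, (∫ x₀, L19 d τ y x₀ ∂μ)
      = (InnerProductSpace.toDual ℝ (EuclideanSpace ℝ (Fin d))) (G y) := by
    intro y
    ext v'
    rw [ContinuousLinearMap.integral_apply (hL1int y), InnerProductSpace.toDual_apply_apply,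
      real_inner_comm, hG]
    rw [← integral_inner (hHint y)]
    refine integral_congr_ae (Filter.Eventually.of_forall fun x₀ => ?_)
    simp only [L19, Hf9, ContinuousLinearMap.smul_apply, innerSL_apply_apply, smul_eq_mul,
      real_inner_smul_right]
    rw [real_inner_comm]
  have hlog : ∀ y, HasGradientAt (fun z => Real.log (p z)) ((p y)⁻¹ • G y) y := by
    intro y
    have h := (hP y).log (hppos y).ne'
    have heq : (InnerProductSpace.toDual ℝ (EuclideanSpace ℝ (Fin d))) ((p y)⁻¹ • G y)
        = (p y)⁻¹ • ∫ x₀, L19 d τ y x₀ ∂μ := by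
      rw [_root_.map_smul, ← hP'eq y]
    rw [hasGradientAt_iff_hasFDerivAt, heq]
    exact h
  have hfeq : (fun y => gradient (fun z => Real.log (p z)) y) = fun y => (p y)⁻¹ • G y :=
    funext fun y => (hlog y).gradient
  have hGd : HasFDerivAt G (∫ x₀, Mf9 d τ x x₀ ∂μ) x := by
    have h := hasFDerivAt_integral_of_dominated_of_fderiv_le
      (F := fun z x₀ => Hf9 d τ z x₀) (F' := fun z x₀ => Mf9 d τ z x₀)
      (bound := fun _ => τ⁻¹ * C + τ⁻¹ * (τ⁻¹ * C * (|R| + (‖x‖ + 1))) * (|R| + (‖x‖ + 1)))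
      (μ := μ) (x₀ := x) (s := Metric.ball x 1) (Metric.ball_mem_nhds x one_pos)
      (Filter.Eventually.of_forall fun z => (cont_Hf9 τ z).aestronglyMeasurable)
      (hHint x) ((cont_Mf9 τ x).aestronglyMeasurable) ?_ (integrable_const _)
      (Filter.Eventually.of_forall fun x₀ z _ => hasFDerivAt_Hf9 hτ0 x₀ z)
    · exact h
    · filter_upwards [hsupp] with x₀ hx₀ z hz
      refine (Mf9_norm_le hτ0 hx₀ z).trans ?_
      have hz' : ‖z‖ ≤ ‖x‖ + 1 := by
        have := mem_ball_iff_norm.mp hz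
        have h2 := norm_sub_norm_le z x
        linarith
      gcongr <;> positivity
  have hinv : HasFDerivAt (fun y => (p y)⁻¹)
      ((-(p x ^ 2)⁻¹) • (∫ x₀, L19 d τ x x₀ ∂μ)) x :=
    (hasDerivAt_inv (hppos x).ne').comp_hasFDerivAt x (hP x)
  have hs := hinv.smul hGd
  rw [hfeq, show (fun y => (p y)⁻¹ • G y) = (fun y => (p y)⁻¹) • G from rfl, hs.fderiv]
  have hIcm : (∫ x₀, w x₀ • (x - Real.sqrt (1 - τ) • x₀) ∂μ) = p x • cm := by
    rw [hcm, smul_smul, mul_inv_cancel₀ (hppos x).ne', one_smul]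
  have hGx : G x = (-(τ⁻¹ * p x)) • cm := by
    have h1 : G x = ∫ x₀, (-τ⁻¹ : ℝ) • (w x₀ • (x - Real.sqrt (1 - τ) • x₀)) ∂μ := by
      rw [hG]
      refine integral_congr_ae (Filter.Eventually.of_forall fun x₀ => ?_)
      show Hf9 d τ x x₀ = -τ⁻¹ • w x₀ • (x - Real.sqrt (1 - τ) • x₀)
      rw [hw' x₀]
      unfold Hf9
      module
    rw [h1, integral_smul, hIcm, smul_smul]
    congr 1
    ring
  have hIL : (∫ x₀, L19 d τ x x₀ ∂μ) v = (-(τ⁻¹ * p x)) * (inner ℝ cm v : ℝ) := by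
    rw [hP'eq x, InnerProductSpace.toDual_apply_apply, hGx, real_inner_smul_left]
  have hIq : (∫ x₀, (w x₀ * (inner ℝ (x - Real.sqrt (1 - τ) • x₀) v : ℝ)) •
      (x - Real.sqrt (1 - τ) • x₀) ∂μ) = p x • cq v := by
    rw [hcq, smul_smul, mul_inv_cancel₀ (hppos x).ne', one_smul]
  have hqint : Integrable (fun x₀ => (w x₀ * (inner ℝ (x - Real.sqrt (1 - τ) • x₀) v : ℝ)) •
      (x - Real.sqrt (1 - τ) • x₀)) μ := by
    simp only [hw']
    refine Integrable.mono' (integrable_const (C * ((|R| + ‖x‖) * ‖v‖) * (|R| + ‖x‖))) ?_ ?_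
    · apply Continuous.aestronglyMeasurable
      apply Continuous.fun_smul
      · exact (cont_Kf9 τ x).mul (Continuous.inner (by fun_prop) continuous_const)
      · fun_prop
    · filter_upwards [hsupp] with x₀ hx₀
      have hV : ‖x - Real.sqrt (1 - τ) • x₀‖ ≤ |R| + ‖x‖ := by
        rw [norm_sub_rev]; exact sub_norm_le9 hτ0 hx₀ x
      rw [norm_smul]
      refine mul_le_mul ?_ hV (norm_nonneg _) (by positivity)
      rw [Real.norm_eq_abs, abs_mul]
      refine mul_le_mul ?_ ?_ (abs_nonneg _) (by positivity)
      · rw [abs_of_pos (Kf9_pos hτ0 x x₀)]; exact Kf9_le hτ0 x x₀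
      · exact (abs_real_inner_le_norm _ _).trans
          (mul_le_mul_of_nonneg_right hV (norm_nonneg _))
  have hIM : (∫ x₀, Mf9 d τ x x₀ ∂μ) v
      = (-(τ⁻¹ * p x)) • v + ((τ⁻¹ * τ⁻¹) * p x) • cq v := by
    rw [ContinuousLinearMap.integral_apply hMint]
    have hpt : ∀ x₀, Mf9 d τ x x₀ v
        = (-τ⁻¹ * Kf9 d τ x x₀) • v + (τ⁻¹ * τ⁻¹) •
          ((w x₀ * (inner ℝ (x - Real.sqrt (1 - τ) • x₀) v : ℝ)) •
            (x - Real.sqrt (1 - τ) • x₀)) := by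
      intro x₀
      rw [hw' x₀]
      simp only [Mf9, L19, ContinuousLinearMap.add_apply, ContinuousLinearMap.smul_apply,
        ContinuousLinearMap.neg_apply, ContinuousLinearMap.id_apply,
        ContinuousLinearMap.smulRight_apply, innerSL_apply_apply, smul_eq_mul]
      rw [show (inner ℝ (Real.sqrt (1 - τ) • x₀ - x) v : ℝ)
          = -(inner ℝ (x - Real.sqrt (1 - τ) • x₀) v : ℝ) by rw [← inner_neg_left, neg_sub]]
      module
    have i2 : Integrable (fun x₀ => (τ⁻¹ * τ⁻¹ : ℝ) •
        ((w x₀ * (inner ℝ (x - Real.sqrt (1 - τ) • x₀) v : ℝ)) •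
          (x - Real.sqrt (1 - τ) • x₀))) μ := hqint.smul (τ⁻¹ * τ⁻¹ : ℝ)
    rw [integral_congr_ae (Filter.Eventually.of_forall hpt),
      integral_add (((hKint x).const_mul _).smul_const v) i2,
      integral_smul_const, integral_smul, hIq, integral_const_mul, ← hp' x]
    module
  simp only [ContinuousLinearMap.add_apply, ContinuousLinearMap.smul_apply,
    ContinuousLinearMap.smulRight_apply]
  rw [hIM, hIL, hGx]
  have hpne : p x ≠ 0 := (hppos x).ne'
  match_scalars <;> field_simp <;> ring_nf <;> field_simp
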